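/- Let d ≥ 4 be an integer and let f ∈ C[x,y,z] be given by f = x^{2m} + (xz + y^2)^m if d = 2m is even (m ≥ 2) and by f = x·(x^{2m} + (xz + y^2)^m) if d = 2m + 1 is odd (m ≥ 2). Then for every integer j with 1 ≤ j ≤ d − 3, every homogeneous Jacobian syzygy of f of degree j equals h·(0, x, −2y) for some homogeneous polynomial h of degree j − 1; that is, AR(f)_j = { (0, xh, −2yh) : h ∈ C[x,y,z] homogeneous of degree j − 1 }. -/

import Mathlib

open MvPolynomial

/-- The Jacobian map sending a triple `(a,b,c)` to `a·f_x + b·f_y + c·f_z`. -/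
noncomputable def jacMap (f : MvPolynomial (Fin 3) ℂ) :
    (Fin 3 → MvPolynomial (Fin 3) ℂ) →ₗ[MvPolynomial (Fin 3) ℂ] MvPolynomial (Fin 3) ℂ where
  toFun v := ∑ i, v i * pderiv i f
  map_add' a b := by simp [add_mul, Finset.sum_add_distrib]
  map_smul' c a := by simp [Finset.mul_sum, mul_assoc]

/-- The module of Jacobian syzygies `AR(f)`. -/
noncomputable def AR (f : MvPolynomial (Fin 3) ℂ) :
    Submodule (MvPolynomial (Fin 3) ℂ) (Fin 3 → MvPolynomial (Fin 3) ℂ) :=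
  LinearMap.ker (jacMap f)

/-! ### Auxiliary machinery -/

/-- The polynomial `q = xz + y²`. -/
noncomputable abbrev qp : MvPolynomial (Fin 3) ℂ := X 0 * X 2 + X 1 ^ 2

/-- The "set `x = 0`" ring homomorphism. -/
noncomputable def Ehom : MvPolynomial (Fin 3) ℂ →+* MvPolynomial (Fin 2) ℂ :=
  (Polynomial.evalRingHom 0).comp (MvPolynomial.finSuccEquiv ℂ 2).toAlgHom.toRingHom

@[simp] lemma E_X0 : Ehom (X 0) = 0 := by
  simp [Ehom, finSuccEquiv_X_zero]

@[simp] lemma E_X1 : Ehom (X 1) = X 0 := by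
  have : (X 1 : MvPolynomial (Fin 3) ℂ) = X ((0 : Fin 2).succ) := by norm_num
  simp [Ehom, this, finSuccEquiv_X_succ]

@[simp] lemma E_X2 : Ehom (X 2) = X 1 := by
  have : (X 2 : MvPolynomial (Fin 3) ℂ) = X ((1 : Fin 2).succ) := by norm_num
  simp [Ehom, this, finSuccEquiv_X_succ]

lemma X0_dvd_of_E {p : MvPolynomial (Fin 3) ℂ} (h : Ehom p = 0) : X 0 ∣ p := by
  have h' : Polynomial.X ∣ (finSuccEquiv ℂ 2) p := by
    rw [Polynomial.X_dvd_iff, Polynomial.coeff_zero_eq_eval_zero]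
    exact h
  obtain ⟨s, hs⟩ := h'
  refine ⟨(finSuccEquiv ℂ 2).symm s, ?_⟩
  apply (finSuccEquiv ℂ 2).injective
  rw [map_mul, hs, finSuccEquiv_X_zero, AlgEquiv.apply_symm_apply]

@[simp] lemma E_q : Ehom qp = X 0 ^ 2 := by simp [qp]

lemma qp_ne : qp ≠ 0 := by
  intro h
  have := congrArg Ehom h
  simp at this

lemma q_dvd_of_X_mul {t s : MvPolynomial (Fin 3) ℂ} (h : X 0 * t = qp * s) : qp ∣ t := by
  have hE := congrArg Ehom h
  simp [mul_comm] at hE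
  obtain ⟨s', hs'⟩ := X0_dvd_of_E hE
  refine ⟨s', mul_left_cancel₀ (X_ne_zero 0) ?_⟩
  rw [h, hs']; ring

lemma q_dvd_cancel_pow : ∀ (N : ℕ) (a : MvPolynomial (Fin 3) ℂ),
    qp ∣ a * X 0 ^ N → qp ∣ a := by
  intro N
  induction N with
  | zero => intro a h; simpa using h
  | succ n ih =>
    intro a h
    obtain ⟨s, hs⟩ := h
    have : qp ∣ a * X 0 ^ n := q_dvd_of_X_mul (t := a * X 0 ^ n) (by rw [← hs]; ring)
    exact ih a this

lemma q_pow_dvd : ∀ (k N : ℕ) (a : MvPolynomial (Fin 3) ℂ),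
    qp ^ k ∣ a * X 0 ^ N → qp ^ k ∣ a := by
  intro k
  induction k with
  | zero => intro N a _; simp only [pow_zero]; exact one_dvd a
  | succ n ih =>
    intro N a h
    obtain ⟨a1, ha1⟩ := q_dvd_cancel_pow N a (dvd_trans (dvd_pow_self qp (Nat.succ_ne_zero n)) h)
    obtain ⟨s, hs⟩ := h
    have hcan : a1 * X 0 ^ N = qp ^ n * s := by
      apply mul_left_cancel₀ qp_ne
      rw [show qp * (a1 * X 0 ^ N) = (qp * a1) * X 0 ^ N from by ring, ← ha1, hs]; ring
    obtain ⟨a2, ha2⟩ := ih N a1 ⟨s, hcan⟩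
    exact ⟨a2, by rw [ha1, ha2]; ring⟩

lemma dvd_cancel_C {n : ℂ} (hn : n ≠ 0) {p a : MvPolynomial (Fin 3) ℂ}
    (h : p ∣ C n * a) : p ∣ a := by
  obtain ⟨w, hw⟩ := h
  have hCC : (C n * C n⁻¹ : MvPolynomial (Fin 3) ℂ) = 1 := by
    rw [← C_mul, mul_inv_cancel₀ hn, map_one]
  exact ⟨C n⁻¹ * w, by linear_combination C n⁻¹ * hw - a * hCC⟩

lemma self_comp {p : MvPolynomial (Fin 3) ℂ} {n : ℕ} (hp : p.IsHomogeneous n) :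
    homogeneousComponent n p = p := by
  rw [homogeneousComponent_of_mem ((mem_homogeneousSubmodule _ _).2 hp), if_pos rfl]

lemma hcomp_mul {n : ℕ} {p : MvPolynomial (Fin 3) ℂ} (hp : p.IsHomogeneous n) (k : ℕ)
    (t : MvPolynomial (Fin 3) ℂ) :
    homogeneousComponent (n + k) (p * t) = p * homogeneousComponent k t := by
  induction t using MvPolynomial.induction_on' with
  | monomial d r =>
    have h2 : (monomial d r).IsHomogeneous d.degree := isHomogeneous_monomial r rfl
    rw [homogeneousComponent_of_mem ((mem_homogeneousSubmodule _ _).2 (hp.mul h2)),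
        homogeneousComponent_of_mem ((mem_homogeneousSubmodule _ _).2 h2)]
    by_cases h : k = d.degree
    · rw [if_pos (by omega), if_pos h]
    · rw [if_neg (by omega), if_neg h, mul_zero]
  | add p' q' hp' hq' => rw [mul_add, map_add, map_add, hp', hq', mul_add]

lemma hcomp_lt {n k : ℕ} {p : MvPolynomial (Fin 3) ℂ} (hp : p.IsHomogeneous n)
    (t : MvPolynomial (Fin 3) ℂ) (hk : k < n) :
    homogeneousComponent k (p * t) = 0 := by
  induction t using MvPolynomial.induction_on' with
  | monomial d r =>
    have h2 : (monomial d r).IsHomogeneous d.degree := isHomogeneous_monomial r rfl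
    rw [homogeneousComponent_of_mem ((mem_homogeneousSubmodule _ _).2 (hp.mul h2)),
        if_neg (by omega)]
  | add p' q' hp' hq' => rw [mul_add, map_add, hp', hq', add_zero]

lemma hq2 (k : ℕ) : (qp ^ (k+1)).IsHomogeneous (2*(k+1)) := by
  have h1 : (X 0 * X 2 : MvPolynomial (Fin 3) ℂ).IsHomogeneous 2 := by
    simpa using (isHomogeneous_X ℂ (0 : Fin 3)).mul (isHomogeneous_X ℂ 2)
  have h2 : ((X 1 : MvPolynomial (Fin 3) ℂ) ^ 2).IsHomogeneous 2 := by
    simpa using (isHomogeneous_X ℂ (1 : Fin 3)).pow 2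
  exact (h1.add h2).pow (k+1)

lemma final_step {j : ℕ} (hj : 1 ≤ j) {b c : MvPolynomial (Fin 3) ℂ}
    (hb : b.IsHomogeneous j)
    (hbc : 2 * b * X 1 + c * X 0 = 0) :
    ∃ h : MvPolynomial (Fin 3) ℂ, h.IsHomogeneous (j - 1) ∧
      b = X 0 * h ∧ c = -(2 * X 1) * h := by
  have hEb : Ehom b = 0 := by
    have hE := congrArg Ehom hbc
    simp [mul_eq_zero, X_ne_zero, map_ofNat] at hE
    exact hE
  obtain ⟨h, hh⟩ := X0_dvd_of_E hEb
  set h' := homogeneousComponent (j - 1) h with hh'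
  have hb' : b = X 0 * h' := by
    have e1 : homogeneousComponent (1 + (j - 1)) (X 0 * h) = X 0 * h' :=
      hcomp_mul (isHomogeneous_X ℂ 0) (j - 1) h
    rw [show 1 + (j - 1) = j from by omega, ← hh, self_comp hb] at e1
    exact e1
  have hc : c = -(2 * X 1) * h' := by
    have hx : X 0 * (c + (2 * X 1) * h') = 0 := by
      linear_combination hbc - 2 * X 1 * hb'
    rcases mul_eq_zero.mp hx with h'' | h''
    · exact absurd h'' (X_ne_zero 0)
    · linear_combination h''
  exact ⟨h', homogeneousComponent_isHomogeneous _ _, hb', hc⟩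

lemma pd20 : pderiv (0 : Fin 3) (X 2 : MvPolynomial (Fin 3) ℂ) = 0 :=
  pderiv_X_of_ne (by decide)
lemma pd10 : pderiv (0 : Fin 3) (X 1 : MvPolynomial (Fin 3) ℂ) = 0 :=
  pderiv_X_of_ne (by decide)
lemma pd01 : pderiv (1 : Fin 3) (X 0 : MvPolynomial (Fin 3) ℂ) = 0 :=
  pderiv_X_of_ne (by decide)
lemma pd21 : pderiv (1 : Fin 3) (X 2 : MvPolynomial (Fin 3) ℂ) = 0 :=
  pderiv_X_of_ne (by decide)
lemma pd02 : pderiv (2 : Fin 3) (X 0 : MvPolynomial (Fin 3) ℂ) = 0 :=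
  pderiv_X_of_ne (by decide)
lemma pd12 : pderiv (2 : Fin 3) (X 1 : MvPolynomial (Fin 3) ℂ) = 0 :=
  pderiv_X_of_ne (by decide)

lemma pdq0 : pderiv (0 : Fin 3) qp = X 2 := by
  simp [qp, pderiv_mul, pderiv_pow, pd20, pd10, pderiv_X_self]
lemma pdq1 : pderiv (1 : Fin 3) qp = 2 * X 1 := by
  simp [qp, pderiv_mul, pderiv_pow, pd01, pd21, pderiv_X_self]
lemma pdq2 : pderiv (2 : Fin 3) qp = X 0 := by
  simp [qp, pderiv_mul, pderiv_pow, pd02, pd12, pderiv_X_self]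

lemma pd_even0 (k : ℕ) : pderiv (0 : Fin 3) (X 0 ^ (2*(k+2)) + qp ^ (k+2)) =
    (2*(k:MvPolynomial (Fin 3) ℂ)+4) * X 0 ^ (2*k+3)
      + ((k:MvPolynomial (Fin 3) ℂ)+2) * qp^(k+1) * X 2 := by
  rw [map_add, pderiv_pow, pderiv_pow, pdq0, pderiv_X_self,
    show 2*(k+2)-1 = 2*k+3 from by omega, show (k+2)-1 = k+1 from by omega]
  push_cast
  ring

lemma pd_even1 (k : ℕ) : pderiv (1 : Fin 3) (X 0 ^ (2*(k+2)) + qp ^ (k+2)) =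
    (2*(k:MvPolynomial (Fin 3) ℂ)+4) * X 1 * qp^(k+1) := by
  rw [map_add, pderiv_pow, pderiv_pow, pdq1, pd01, show (k+2)-1 = k+1 from by omega]
  push_cast
  ring

lemma pd_even2 (k : ℕ) : pderiv (2 : Fin 3) (X 0 ^ (2*(k+2)) + qp ^ (k+2)) =
    ((k:MvPolynomial (Fin 3) ℂ)+2) * X 0 * qp^(k+1) := by
  rw [map_add, pderiv_pow, pderiv_pow, pdq2, pd02, show (k+2)-1 = k+1 from by omega]
  push_cast
  ring

lemma pd_odd0 (k : ℕ) : pderiv (0 : Fin 3) (X 0 * (X 0 ^ (2*(k+2)) + qp ^ (k+2))) =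
    (2*(k:MvPolynomial (Fin 3) ℂ)+5) * X 0 ^ (2*k+4) + qp^(k+2)
      + ((k:MvPolynomial (Fin 3) ℂ)+2) * X 0 * X 2 * qp^(k+1) := by
  rw [pderiv_mul, pd_even0, pderiv_X_self, show 2*k+4 = (2*k+3)+1 from by omega]
  ring

lemma pd_odd1 (k : ℕ) : pderiv (1 : Fin 3) (X 0 * (X 0 ^ (2*(k+2)) + qp ^ (k+2))) =
    (2*(k:MvPolynomial (Fin 3) ℂ)+4) * X 0 * X 1 * qp^(k+1) := by
  rw [pderiv_mul, pd_even1, pd01]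
  ring

lemma pd_odd2 (k : ℕ) : pderiv (2 : Fin 3) (X 0 * (X 0 ^ (2*(k+2)) + qp ^ (k+2))) =
    ((k:MvPolynomial (Fin 3) ℂ)+2) * X 0 ^ 2 * qp^(k+1) := by
  rw [pderiv_mul, pd_even2, pd02]
  ring

lemma cast_aux (k : ℕ) : ((k:ℂ)+2) ≠ 0 ∧ (2*(k:ℂ)+4) ≠ 0 ∧ (2*(k:ℂ)+5) ≠ 0 := by
  refine ⟨fun h => ?_, fun h => ?_, fun h => ?_⟩
  · have h2 : ((k+2:ℕ):ℂ) = 0 := by push_cast; linear_combination h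
    exact Nat.cast_ne_zero.mpr (by omega) h2
  · have h2 : ((2*k+4:ℕ):ℂ) = 0 := by push_cast; linear_combination h
    exact Nat.cast_ne_zero.mpr (by omega) h2
  · have h2 : ((2*k+5:ℕ):ℂ) = 0 := by push_cast; linear_combination h
    exact Nat.cast_ne_zero.mpr (by omega) h2

lemma castR_aux (k : ℕ) :
    (C ((k:ℂ)+2) : MvPolynomial (Fin 3) ℂ) = (k:MvPolynomial (Fin 3) ℂ)+2 ∧
    (C (2*(k:ℂ)+4) : MvPolynomial (Fin 3) ℂ) = 2*(k:MvPolynomial (Fin 3) ℂ)+4 ∧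
    (C (2*(k:ℂ)+5) : MvPolynomial (Fin 3) ℂ) = 2*(k:MvPolynomial (Fin 3) ℂ)+5 := by
  refine ⟨?_, ?_, ?_⟩ <;> simp [map_add, map_mul, map_ofNat, map_natCast]

lemma kR_ne (k : ℕ) : ((k:MvPolynomial (Fin 3) ℂ)+2) ≠ 0 := by
  rw [← (castR_aux k).1]
  simp only [ne_eq, C_eq_zero]
  exact (cast_aux k).1

theorem stmt8 (d m : ℕ) (f : MvPolynomial (Fin 3) ℂ) (hd : 4 ≤ d)
    (hf : (d = 2 * m ∧ 2 ≤ m ∧ f = X 0 ^ (2 * m) + (X 0 * X 2 + X 1 ^ 2) ^ m) ∨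
          (d = 2 * m + 1 ∧ 2 ≤ m ∧ f = X 0 * (X 0 ^ (2 * m) + (X 0 * X 2 + X 1 ^ 2) ^ m))) :
    ∀ j : ℕ, 1 ≤ j → j ≤ d - 3 → ∀ v : Fin 3 → MvPolynomial (Fin 3) ℂ,
      (v ∈ AR f ∧ ∀ i, (v i).IsHomogeneous j) ↔
        ∃ h : MvPolynomial (Fin 3) ℂ, h.IsHomogeneous (j - 1) ∧
          v 0 = 0 ∧ v 1 = X 0 * h ∧ v 2 = -(2 * X 1) * h := by
  intro j hj1 hj2 v
  constructor
  · rintro ⟨hker, hhom⟩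
    have heq : v 0 * pderiv 0 f + v 1 * pderiv 1 f + v 2 * pderiv 2 f = 0 := by
      have h := LinearMap.mem_ker.mp hker
      rwa [show jacMap f v = ∑ i, v i * pderiv i f from rfl, Fin.sum_univ_three] at h
    rcases hf with ⟨hd', hm, hfe⟩ | ⟨hd', hm, hfe⟩
    · -- even case
      obtain ⟨k, rfl⟩ : ∃ k, m = k + 2 := ⟨m - 2, by omega⟩
      subst hfe hd'
      rw [pd_even0, pd_even1, pd_even2] at heq
      have hdvd : qp ^ (k+1) ∣
          (((2*(k:MvPolynomial (Fin 3) ℂ)+4)) * v 0) * X 0 ^ (2*k+3) :=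
        ⟨-(((k:MvPolynomial (Fin 3) ℂ)+2) * (v 0) * X 2
            + (2*(k:MvPolynomial (Fin 3) ℂ)+4) * (v 1) * X 1
            + ((k:MvPolynomial (Fin 3) ℂ)+2) * (v 2) * X 0),
          by linear_combination heq⟩
      have hdvd2 : qp ^ (k+1) ∣ v 0 := by
        apply dvd_cancel_C (cast_aux k).2.1
        rw [(castR_aux k).2.1]
        exact q_pow_dvd (k+1) (2*k+3) _ hdvd
      obtain ⟨t, ht⟩ := hdvd2
      have ha0 : v 0 = 0 := by
        have h1 := self_comp (hhom 0)
        rw [ht, hcomp_lt (hq2 k) t (by omega)] at h1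
        rw [ht]; exact h1.symm
      have hbc0 : qp^(k+1) * (((k:MvPolynomial (Fin 3) ℂ)+2)
          * (2 * (v 1) * X 1 + (v 2) * X 0)) = 0 := by
        linear_combination heq - ((2*(k:MvPolynomial (Fin 3) ℂ)+4) * X 0 ^ (2*k+3)
          + ((k:MvPolynomial (Fin 3) ℂ)+2) * qp^(k+1) * X 2) * ha0
      have hbc : 2 * (v 1) * X 1 + (v 2) * X 0 = 0 := by
        rcases mul_eq_zero.mp hbc0 with h' | h'
        · exact absurd h' (pow_ne_zero _ qp_ne)
        · rcases mul_eq_zero.mp h' with h'' | h''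
          · exact absurd h'' (kR_ne k)
          · exact h''
      obtain ⟨h, hh, hb, hc⟩ := final_step hj1 (hhom 1) hbc
      exact ⟨h, hh, ha0, hb, hc⟩
    · -- odd case
      obtain ⟨k, rfl⟩ : ∃ k, m = k + 2 := ⟨m - 2, by omega⟩
      subst hfe hd'
      rw [pd_odd0, pd_odd1, pd_odd2] at heq
      have hdvd : qp ^ (k+1) ∣
          (((2*(k:MvPolynomial (Fin 3) ℂ)+5)) * v 0) * X 0 ^ (2*k+4) :=
        ⟨-((v 0) * qp + ((k:MvPolynomial (Fin 3) ℂ)+2) * (v 0) * X 0 * X 2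
            + (2*(k:MvPolynomial (Fin 3) ℂ)+4) * (v 1) * X 0 * X 1
            + ((k:MvPolynomial (Fin 3) ℂ)+2) * (v 2) * X 0^2),
          by linear_combination heq⟩
      have hdvd2 : qp ^ (k+1) ∣ v 0 := by
        apply dvd_cancel_C (cast_aux k).2.2
        rw [(castR_aux k).2.2]
        exact q_pow_dvd (k+1) (2*k+4) _ hdvd
      obtain ⟨t, ht⟩ := hdvd2
      have ha0 : v 0 = 0 := by
        by_cases hj' : j = 2*k+2
        · -- top degree: need the extra argument
          have ht0 : v 0 = qp^(k+1) * homogeneousComponent 0 t := by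
            have e := hcomp_mul (hq2 k) 0 t
            rw [show 2*(k+1)+0 = j from by omega, ← ht, self_comp (hhom 0)] at e
            exact e
          set t0 := homogeneousComponent 0 t with ht0def
          have hP : qp^(k+1) * ((2*(k:MvPolynomial (Fin 3) ℂ)+5)*t0*X 0^(2*k+4)
              + t0*qp^(k+2) + ((k:MvPolynomial (Fin 3) ℂ)+2)*t0*X 0*X 2*qp^(k+1)
              + (2*(k:MvPolynomial (Fin 3) ℂ)+4)*(v 1)*X 0*X 1
              + ((k:MvPolynomial (Fin 3) ℂ)+2)*(v 2)*X 0^2) = 0 := by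
            linear_combination heq - ((2*(k:MvPolynomial (Fin 3) ℂ)+5) * X 0 ^ (2*k+4)
              + qp^(k+2) + ((k:MvPolynomial (Fin 3) ℂ)+2) * X 0 * X 2 * qp^(k+1)) * ht0
          have hP0 := (mul_eq_zero.mp hP).resolve_left (pow_ne_zero _ qp_ne)
          have hE := congrArg Ehom hP0
          simp [map_ofNat] at hE
          obtain ⟨u, hu⟩ := X0_dvd_of_E hE
          have ht00 : t0 = 0 := by
            have e := self_comp (homogeneousComponent_isHomogeneous 0 t)
            rw [← ht0def, hu, hcomp_lt (isHomogeneous_X ℂ 0) u (by omega)] at e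
            rw [hu]; exact e.symm
          rw [ht0, ht00, mul_zero]
        · -- low degree
          have h1 := self_comp (hhom 0)
          rw [ht, hcomp_lt (hq2 k) t (by omega)] at h1
          rw [ht]; exact h1.symm
      have hbc0 : qp^(k+1) * (X 0 * (((k:MvPolynomial (Fin 3) ℂ)+2)
          * (2 * (v 1) * X 1 + (v 2) * X 0))) = 0 := by
        linear_combination heq - ((2*(k:MvPolynomial (Fin 3) ℂ)+5) * X 0 ^ (2*k+4) + qp^(k+2)
          + ((k:MvPolynomial (Fin 3) ℂ)+2) * X 0 * X 2 * qp^(k+1)) * ha0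
      have hbc : 2 * (v 1) * X 1 + (v 2) * X 0 = 0 := by
        rcases mul_eq_zero.mp hbc0 with h' | h'
        · exact absurd h' (pow_ne_zero _ qp_ne)
        · rcases mul_eq_zero.mp h' with h'' | h''
          · exact absurd h'' (X_ne_zero 0)
          · rcases mul_eq_zero.mp h'' with h3 | h3
            · exact absurd h3 (kR_ne k)
            · exact h3
      obtain ⟨h, hh, hb, hc⟩ := final_step hj1 (hhom 1) hbc
      exact ⟨h, hh, ha0, hb, hc⟩
  · rintro ⟨h, hh, h0, h1, h2⟩
    constructor
    · apply LinearMap.mem_ker.mpr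
      show (∑ i, v i * pderiv i f) = 0
      rw [Fin.sum_univ_three, h0, h1, h2]
      rcases hf with ⟨_, hm, rfl⟩ | ⟨_, hm, rfl⟩
      · obtain ⟨k, rfl⟩ : ∃ k, m = k + 2 := ⟨m - 2, by omega⟩
        rw [pd_even1, pd_even2]; ring
      · obtain ⟨k, rfl⟩ : ∃ k, m = k + 2 := ⟨m - 2, by omega⟩
        rw [pd_odd1, pd_odd2]; ring
    · intro i
      fin_cases i
      · show (v 0).IsHomogeneous j
        rw [h0]; exact isHomogeneous_zero _ _ _
      · show (v 1).IsHomogeneous j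
        rw [h1, show j = 1 + (j-1) from by omega]
        exact (isHomogeneous_X ℂ 0).mul hh
      · show (v 2).IsHomogeneous j
        rw [h2, show (-(2 * X 1) * h : MvPolynomial (Fin 3) ℂ)
            = C (-2:ℂ) * (X 1 * h) from by rw [map_neg, map_ofNat]; ring,
          show j = 0 + (1 + (j-1)) from by omega]
        exact (isHomogeneous_C _ _).mul ((isHomogeneous_X ℂ 1).mul hh)
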